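/- (Theorem 1, DILOC convergence.) Let P ∈ ℝ^{N×N} and B ∈ ℝ^{N×M} be entrywise nonnegative with ∑_j P_{ij} + ∑_m B_{im} = 1 for every i, and suppose for every index i there exist r ≥ 0 and indices i = j_0, …, j_r with P_{j_t, j_{t+1}} > 0 for t < r and ∑_m B_{j_r, m} > 0. Let U ∈ ℝ^{M×m} (anchor coordinates) and let X* ∈ ℝ^{N×m} satisfy the barycentric fixed-point equations X* = P·X* + B·U. Then for every initial condition X_0 ∈ ℝ^{N×m}, the DILOC iterates X_{k+1} = P·X_k + B·U converge to X* as k → ∞. -/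

import Mathlib

open Filter

/-- Theorem 1 (DILOC convergence): if the barycentric matrices `P, B` are nonnegative
with `[B P]` row-stochastic and every agent has a path of positive entries of `P`
leading to a row of `B` with positive sum, and the true locations `Xstar` satisfy the
barycentric fixed-point equation `Xstar = P Xstar + B U`, then the DILOC iterates
`X (k+1) = P * X k + B * U` converge to `Xstar` from every initial condition `X 0`. -/
theorem diloc_converges {N M m : ℕ}
    (P : Matrix (Fin N) (Fin N) ℝ) (B : Matrix (Fin N) (Fin M) ℝ)
    (hP : ∀ i j, 0 ≤ P i j) (hB : ∀ i m', 0 ≤ B i m')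
    (hrow : ∀ i, ∑ j, P i j + ∑ m', B i m' = 1)
    (hconn : ∀ i : Fin N, ∃ (r : ℕ) (jseq : ℕ → Fin N), jseq 0 = i ∧
      (∀ t < r, 0 < P (jseq t) (jseq (t + 1))) ∧ 0 < ∑ m', B (jseq r) m')
    (U : Matrix (Fin M) (Fin m) ℝ) (Xstar : Matrix (Fin N) (Fin m) ℝ)
    (hfix : Xstar = P * Xstar + B * U)
    (X : ℕ → Matrix (Fin N) (Fin m) ℝ)
    (hrec : ∀ k, X (k + 1) = P * X k + B * U) :
    Tendsto X atTop (nhds Xstar) := by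
  classical
  -- closed form for the iterates
  have hX : ∀ k, X k = Xstar + P ^ k * (X 0 - Xstar) := by
    intro k
    induction k with
    | zero => simp
    | succ k ih =>
      rw [hrec, ih, Matrix.mul_add, pow_succ', Matrix.mul_assoc]
      rw [add_right_comm, ← hfix]
  -- nonnegativity of powers
  have hPpow : ∀ k i j, 0 ≤ (P ^ k) i j := by
    intro k
    induction k with
    | zero =>
      intro i j
      by_cases h : i = j <;> simp [Matrix.one_apply, h]
    | succ k ih =>
      intro i j
      rw [pow_succ', Matrix.mul_apply]
      exact Finset.sum_nonneg fun x _ => mul_nonneg (hP i x) (ih x j)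
  set F : ℕ → Fin N → ℝ := fun k i => ∑ j, (P ^ k) i j with hF
  have hFnn : ∀ k i, 0 ≤ F k i :=
    fun k i => Finset.sum_nonneg fun j _ => hPpow k i j
  have hF0 : ∀ i, F 0 i = 1 := by
    intro i
    simp [hF, Matrix.one_apply]
  have hFadd : ∀ a b i, F (a + b) i = ∑ j, (P ^ a) i j * F b j := by
    intro a b i
    simp only [hF, pow_add, Matrix.mul_apply]
    rw [Finset.sum_comm]
    simp [Finset.mul_sum]
  have hF1 : ∀ i, F 1 i ≤ 1 := by
    intro i
    have : F 1 i = ∑ j, P i j := by simp [hF]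
    rw [this]
    have := hrow i
    have hBnn : 0 ≤ ∑ m', B i m' := Finset.sum_nonneg fun j _ => hB i j
    linarith
  have hFle1 : ∀ k i, F k i ≤ 1 := by
    intro k
    induction k with
    | zero => intro i; rw [hF0]
    | succ k ih =>
      intro i
      have h : F (1 + k) i = ∑ j, P i j * F k j := by
        have := hFadd 1 k i
        simpa using this
      have : F (k + 1) i = ∑ j, P i j * F k j := by rw [add_comm]; exact h
      rw [this]
      calc ∑ j, P i j * F k j ≤ ∑ j, P i j * 1 :=
            Finset.sum_le_sum fun j _ =>
              mul_le_mul_of_nonneg_left (ih j) (hP i j)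
        _ = F 1 i := by simp [hF]
        _ ≤ 1 := hF1 i
  have hFstep : ∀ k i, F (k + 1) i = ∑ j, P i j * F k j := by
    intro k i
    have := hFadd 1 k i
    rw [add_comm 1 k] at this
    simpa using this
  -- monotonicity
  have hFdec : ∀ k i, F (k + 1) i ≤ F k i := by
    intro k
    induction k with
    | zero => intro i; rw [hF0]; exact hF1 i
    | succ k ih =>
      intro i
      rw [hFstep (k + 1) i, hFstep k i]
      exact Finset.sum_le_sum fun j _ =>
        mul_le_mul_of_nonneg_left (ih j) (hP i j)
  have hFanti : ∀ i, Antitone (fun k => F k i) := by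
    intro i
    exact antitone_nat_of_succ_le fun k => hFdec k i
  -- every row eventually leaks
  have hlt : ∀ i, ∃ r, F (r + 1) i < 1 := by
    intro i
    obtain ⟨r, jseq, hj0, hpath, hleak⟩ := hconn i
    have key : ∀ t, t ≤ r → F (t + 1) (jseq (r - t)) < 1 := by
      intro t
      induction t with
      | zero =>
        intro _
        have : F 1 (jseq r) = ∑ j, P (jseq r) j := by simp [hF]
        rw [Nat.sub_zero, this]
        have := hrow (jseq r)
        linarith
      | succ t ih =>
        intro ht
        have ht' : t ≤ r := Nat.le_of_succ_le ht
        have ihF := ih ht'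
        set i0 := jseq (r - (t + 1)) with hi0
        have hlt1 : r - (t + 1) < r := by omega
        have hsucc : r - (t + 1) + 1 = r - t := by omega
        have hpos : 0 < P i0 (jseq (r - t)) := by
          have := hpath (r - (t + 1)) hlt1
          rwa [hsucc] at this
        rw [hFstep (t + 1) i0]
        have hstrict : ∑ j, P i0 j * F (t + 1) j < ∑ j, P i0 j := by
          apply Finset.sum_lt_sum
          · intro j _
            calc P i0 j * F (t + 1) j ≤ P i0 j * 1 :=
                  mul_le_mul_of_nonneg_left (hFle1 (t + 1) j) (hP i0 j)
              _ = P i0 j := mul_one _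
          · exact ⟨jseq (r - t), Finset.mem_univ _, by
              nlinarith [hFnn (t + 1) (jseq (r - t))]⟩
        have hle : ∑ j, P i0 j ≤ 1 := by
          have := hrow i0
          have hBnn : 0 ≤ ∑ m', B i0 m' := Finset.sum_nonneg fun j _ => hB i0 j
          linarith
        linarith
    have := key r le_rfl
    rw [Nat.sub_self, hj0] at this
    exact ⟨r, this⟩
  choose r hr using hlt
  -- reduce to entrywise convergence
  apply tendsto_pi_nhds.2
  intro i
  rw [tendsto_pi_nhds]
  intro l
  have hne : (Finset.univ : Finset (Fin N)).Nonempty := ⟨i, Finset.mem_univ i⟩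
  set K : ℕ := (Finset.univ.sup r) + 1 with hKdef
  have hK0 : 0 < K := Nat.succ_pos _
  have hK : ∀ j, F K j < 1 := by
    intro j
    have h1 : r j + 1 ≤ K := by
      have := Finset.le_sup (Finset.mem_univ j) (f := r)
      omega
    exact lt_of_le_of_lt (hFanti j h1) (hr j)
  set c : ℝ := Finset.univ.sup' hne (F K) with hcdef
  have hc1 : c < 1 := (Finset.sup'_lt_iff hne).2 fun j _ => hK j
  have hc0 : 0 ≤ c := le_trans (hFnn K i) (Finset.le_sup' (F K) (Finset.mem_univ i))
  have hcb : ∀ j, F K j ≤ c := fun j => Finset.le_sup' (F K) (Finset.mem_univ j)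
  have hgeom : ∀ n j, F (n * K) j ≤ c ^ n := by
    intro n
    induction n with
    | zero => intro j; simp [hF0]
    | succ n ih =>
      intro j
      have h1 : (n + 1) * K = K + n * K := by ring
      rw [h1, hFadd K (n * K) j]
      calc ∑ x, (P ^ K) j x * F (n * K) x
          ≤ ∑ x, (P ^ K) j x * c ^ n :=
            Finset.sum_le_sum fun x _ =>
              mul_le_mul_of_nonneg_left (ih x) (hPpow K j x)
        _ = F K j * c ^ n := by rw [← Finset.sum_mul]
        _ ≤ c * c ^ n :=
            mul_le_mul_of_nonneg_right (hcb j) (pow_nonneg hc0 n)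
        _ = c ^ (n + 1) := (pow_succ' c n).symm
  have hbound : ∀ k j, F k j ≤ c ^ (k / K) := by
    intro k j
    calc F k j ≤ F (k / K * K) j := hFanti j (Nat.div_mul_le_self k K)
      _ ≤ c ^ (k / K) := hgeom (k / K) j
  have hdiv : Tendsto (fun k => k / K) atTop atTop :=
    tendsto_atTop_atTop.2 fun b => ⟨b * K, fun n hn => (Nat.le_div_iff_mul_le hK0).2 hn⟩
  have hpowtend : Tendsto (fun n : ℕ => c ^ n) atTop (nhds 0) :=
    tendsto_pow_atTop_nhds_zero_of_lt_one hc0 hc1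
  have hFtend : Tendsto (fun k => F k i) atTop (nhds 0) := by
    apply squeeze_zero (fun k => hFnn k i) (fun k => hbound k i)
    exact hpowtend.comp hdiv
  -- entrywise bound
  set D : Matrix (Fin N) (Fin m) ℝ := X 0 - Xstar with hD
  set C : ℝ := Finset.univ.sup' hne (fun j => |D j l|) with hC
  have hCb : ∀ j, |D j l| ≤ C := fun j =>
    Finset.le_sup' (fun j => |D j l|) (Finset.mem_univ j)
  have hCnn : 0 ≤ C := le_trans (abs_nonneg _) (hCb i)
  have hEq : ∀ k, X k i l = Xstar i l + ∑ j, (P ^ k) i j * D j l := by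
    intro k
    rw [hX k]
    simp [Matrix.add_apply, Matrix.mul_apply, hD]
  have htail : Tendsto (fun k => ∑ j, (P ^ k) i j * D j l) atTop (nhds 0) := by
    refine squeeze_zero_norm (fun k => ?_) (by simpa using hFtend.mul_const C)
    ·
      rw [Real.norm_eq_abs]
      calc |∑ j, (P ^ k) i j * D j l| ≤ ∑ j, |(P ^ k) i j * D j l| :=
            Finset.abs_sum_le_sum_abs _ _
        _ = ∑ j, (P ^ k) i j * |D j l| := by
            refine Finset.sum_congr rfl fun j _ => ?_
            rw [abs_mul, abs_of_nonneg (hPpow k i j)]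
        _ ≤ ∑ j, (P ^ k) i j * C :=
            Finset.sum_le_sum fun j _ =>
              mul_le_mul_of_nonneg_left (hCb j) (hPpow k i j)
        _ = F k i * C := by rw [← Finset.sum_mul]
  have : Tendsto (fun k => Xstar i l + ∑ j, (P ^ k) i j * D j l) atTop
      (nhds (Xstar i l + 0)) := tendsto_const_nhds.add htail
  rw [add_zero] at this
  exact this.congr fun k => (hEq k).symm
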